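/- Let f be a real polynomial of degree n ≥ 2, let 2 ≤ M ≤ n, and let f_0, ..., f_n and d_0, ..., d_{n-M} be produced by the generalized Euclidean algorithm with step M applied to f. If none of f_0, f_1, ..., f_n is the zero polynomial, then deg f_k = n − k for every k = 0, 1, ..., n, and for every i = 0, 1, ..., n−M the quotient d_i is the monomial d_i(x) = (h_i / h_{i+1}) x, where h_i denotes the leading coefficient of f_i. -/
import Mathlib

open Polynomial

/-- The arithmetic part `f_j` of the polynomial with coefficients `a_0,...,a_n`:
`f_j(x) = Σ_{0 ≤ l ≤ n, l ≡ j (mod M)} a_l x^(n-l)`. -/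
noncomputable def geaInit (a : ℕ → ℝ) (n M j : ℕ) : Polynomial ℝ :=
  ∑ l ∈ Finset.range (n + 1), if l % M = j then C (a l) * X ^ (n - l) else 0

/-- The polynomials `f_0, f_1, ..., f_n` of the generalized Euclidean algorithm with step `M`:
`f_i = d_i f_{i+1} + f_{i+M}` where `d_i = f_i / f_{i+1}` and `f_{i+M} = f_i % f_{i+1}`
(Euclidean division of polynomials). -/
noncomputable def gea (a : ℕ → ℝ) (n M : ℕ) : ℕ → Polynomial ℝ
  | i =>
    if _h : i < M then geaInit a n M i
    else if _h2 : 2 ≤ M then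
      gea a n M (i - M) % gea a n M (i - M + 1)
    else 0
  termination_by i => i
  decreasing_by all_goals omega

/-- key arithmetic fact: same residue and strictly smaller forces a gap of `M`. -/
lemma L1 {M a b : ℕ} (h : a % M = b % M) (hab : a < b) : a + M ≤ b := by
  have hd : M ∣ b - a := (Nat.modEq_iff_dvd' hab.le).mp h
  obtain ⟨c, hc⟩ := hd
  rcases Nat.eq_zero_or_pos c with rfl | hc0
  · omega
  · have : M ≤ M * c := Nat.le_mul_of_pos_right M hc0
    omega

lemma deg_mod_lt {p q : Polynomial ℝ} (hq : q ≠ 0) : (p % q).degree < q.degree := by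
  rw [Polynomial.mod_def, ← degree_mul_leadingCoeff_inv q hq]
  exact degree_modByMonic_lt p (monic_mul_leadingCoeff_inv hq)

lemma geaInit_support {a : ℕ → ℝ} {n M j m : ℕ} (hm : m ∈ (geaInit a n M j).support) :
    ∃ l, l ≤ n ∧ l % M = j ∧ m = n - l := by
  rw [mem_support_iff, geaInit, finset_sum_coeff] at hm
  obtain ⟨l, hl, hne⟩ := Finset.exists_ne_zero_of_sum_ne_zero hm
  by_cases h : l % M = j
  · refine ⟨l, Nat.lt_succ_iff.mp (Finset.mem_range.mp hl), h, ?_⟩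
    rw [if_pos h, coeff_C_mul, coeff_X_pow] at hne
    rcases eq_or_ne (n - l) m with he | he
    · exact he.symm
    · simp [he] at hne
      exact hne.1
  · rw [if_neg h] at hne
    simp at hne

lemma mod_class {M n : ℕ} (i : ℕ) (q : Polynomial ℝ) (hq : q ≠ 0)
    (hqs : ∀ m ∈ q.support, (m + i + 1) % M = n % M) :
    ∀ N (p : Polynomial ℝ), p.natDegree ≤ N →
      (∀ m ∈ p.support, (m + i) % M = n % M) →
      ∀ m ∈ (p % q).support, (m + i) % M = n % M := by
  intro N
  induction N using Nat.strong_induction_on with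
  | _ N IH =>
    intro p hpN hps
    by_cases hdeg : p.degree < q.degree
    · rw [(mod_eq_self_iff hq).mpr hdeg]; exact hps
    · push_neg at hdeg
      have hp0 : p ≠ 0 := by
        intro h
        rw [h, degree_zero] at hdeg
        exact hq (degree_eq_bot.mp (le_bot_iff.mp hdeg))
      have hqd : q.natDegree ≤ p.natDegree := natDegree_le_natDegree hdeg
      set k := p.natDegree - q.natDegree with hk
      set c := p.leadingCoeff / q.leadingCoeff with hc
      have hlcq : q.leadingCoeff ≠ 0 := leadingCoeff_ne_zero.mpr hq
      have hlcp : p.leadingCoeff ≠ 0 := leadingCoeff_ne_zero.mpr hp0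
      have hc0 : c ≠ 0 := div_ne_zero hlcp hlcq
      set t : Polynomial ℝ := q * X ^ k * C c with ht
      have ht0 : t ≠ 0 := by
        simp only [ht]
        exact mul_ne_zero (mul_ne_zero hq (pow_ne_zero _ X_ne_zero)) (fun h => hc0 (by simpa using congrArg (fun r => r.coeff 0) h))
      have hlct : t.leadingCoeff = p.leadingCoeff := by
        simp only [ht, leadingCoeff_mul, leadingCoeff_X_pow, leadingCoeff_C, mul_one, hc]
        field_simp
      have hdt : t.degree = p.degree := by
        rw [ht, degree_mul, degree_mul, degree_C hc0, degree_X_pow,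
          degree_eq_natDegree hq, degree_eq_natDegree hp0]
        rw [add_zero, ← Nat.cast_add, Nat.add_sub_cancel' hqd]
      have hsub : (p - t).degree < p.degree := degree_sub_lt hdt.symm hp0 hlct.symm
      -- support of p - t is in the right class
      have hclass : ∀ m ∈ (p - t).support, (m + i) % M = n % M := by
        intro m hmm
        rw [mem_support_iff, coeff_sub] at hmm
        by_cases hco : t.coeff m = 0
        · exact hps m (mem_support_iff.mpr (by intro h; rw [h, hco] at hmm; simp at hmm))
        · -- m ∈ t.support : k ≤ m and m - k ∈ q.support
          have : t.coeff m = q.coeff (m - k) * c * (if k ≤ m then 1 else 0) := by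
            rw [ht, mul_comm (q * X ^ k) (C c), coeff_C_mul, coeff_mul_X_pow']
            split <;> ring
          rw [this] at hco
          have hkm : k ≤ m := by by_contra h; simp [h] at hco
          have hqm : m - k ∈ q.support := by
            rw [mem_support_iff]; intro h; rw [h] at hco; simp at hco
          have h1 : (m - k) + i + 1 ≡ n [MOD M] := hqs _ hqm
          have h2 : p.natDegree + i ≡ n [MOD M] :=
            hps _ (natDegree_mem_support_of_nonzero hp0)
          have h3 : q.natDegree + i + 1 ≡ n [MOD M] := hqs _ (natDegree_mem_support_of_nonzero hq)
          have heq : (m + i) + (q.natDegree + i + 1) = ((m - k) + i + 1) + (p.natDegree + i) := by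
            omega
          have : (m + i) + (q.natDegree + i + 1) ≡ n + n [MOD M] := by
            rw [heq]; exact h1.add h2
          have h4 : (m + i) + n ≡ n + n [MOD M] :=
            ((Nat.ModEq.refl (m + i)).add h3.symm).trans this
          exact Nat.ModEq.add_right_cancel' n h4
      have hmonic : Monic (q * C q.leadingCoeff⁻¹) := monic_mul_leadingCoeff_inv hq
      have hCC : C q.leadingCoeff⁻¹ * C q.leadingCoeff = 1 := by
        rw [← C_mul, inv_mul_cancel₀ hlcq, C_1]
      have hkey : (q * C q.leadingCoeff⁻¹) * (C q.leadingCoeff * X ^ k * C c)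
          = q * X ^ k * C c := by
        calc (q * C q.leadingCoeff⁻¹) * (C q.leadingCoeff * X ^ k * C c)
            = q * (C q.leadingCoeff⁻¹ * C q.leadingCoeff) * X ^ k * C c := by ring
          _ = q * X ^ k * C c := by rw [hCC, mul_one]
      have hmodeq : p % q = (p - t) % q := by
        have htm : t %ₘ (q * C q.leadingCoeff⁻¹) = 0 := by
          rw [ht, ← hkey]
          exact self_mul_modByMonic hmonic
        rw [Polynomial.mod_def, Polynomial.mod_def, sub_modByMonic, htm, sub_zero]
      rw [hmodeq]
      by_cases hpt : p - t = 0
      · intro m hm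
        rw [hpt] at hm
        simp [Polynomial.mod_def] at hm
      · have hlt : (p - t).natDegree < p.natDegree := natDegree_lt_natDegree hpt hsub
        exact IH (p - t).natDegree (lt_of_lt_of_le hlt hpN) (p - t) le_rfl hclass


lemma gea_lt {a : ℕ → ℝ} {n M i : ℕ} (h : i < M) : gea a n M i = geaInit a n M i := by
  rw [gea]
  simp [h]

lemma gea_ge {a : ℕ → ℝ} {n M i : ℕ} (hM : 2 ≤ M) (h : M ≤ i) :
    gea a n M i = gea a n M (i - M) % gea a n M (i - M + 1) := by
  rw [gea]
  simp [Nat.not_lt.mpr h, hM]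

lemma geaInit_coeff_n (a : ℕ → ℝ) (n M : ℕ) (hn : 0 < n) :
    (geaInit a n M 0).coeff n = a 0 := by
  rw [geaInit, finset_sum_coeff, Finset.sum_eq_single 0]
  · simp
  · intro l hl hl0
    by_cases h : l % M = 0
    · rw [if_pos h, coeff_C_mul, coeff_X_pow]
      have hne : n - l ≠ n := by
        have := Finset.mem_range.mp hl
        omega
      simp only [mul_ite, mul_one, mul_zero, ite_eq_right_iff]
      intro h'
      exact absurd h'.symm hne
    · simp [h]
  · intro h
    simp at h

lemma master (n M : ℕ) (a : ℕ → ℝ) (hM : 2 ≤ M)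
    (hnz : ∀ i ≤ n, gea a n M i ≠ 0) :
    ∀ i, i ≤ n → (∀ m ∈ (gea a n M i).support, (m + i) % M = n % M) ∧
      (gea a n M i).natDegree + i ≤ n := by
  intro i
  induction i using Nat.strong_induction_on with
  | _ i IH =>
    intro hin
    by_cases hiM : i < M
    · rw [gea_lt hiM]
      have hsupp : ∀ m ∈ (geaInit a n M i).support, (m + i) % M = n % M := by
        intro m hm
        obtain ⟨l, hl, hlM, rfl⟩ := geaInit_support hm
        rw [← hlM]
        have h1 : (n - l) + l % M ≡ (n - l) + l [MOD M] :=
          (Nat.ModEq.refl _).add (Nat.mod_modEq l M)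
        have h2 : ((n - l) + l % M) % M = ((n - l) + l) % M := h1
        rw [h2, Nat.sub_add_cancel hl]
      refine ⟨hsupp, ?_⟩
      have hne : geaInit a n M i ≠ 0 := by rw [← gea_lt hiM]; exact hnz i hin
      obtain ⟨l, hl, hlM, hml⟩ := geaInit_support (natDegree_mem_support_of_nonzero hne)
      have := Nat.mod_le l M
      omega
    · have hMi : M ≤ i := Nat.not_lt.mp hiM
      have hrec : gea a n M i = gea a n M (i - M) % gea a n M (i - M + 1) := gea_ge hM hMi
      have h1n : i - M ≤ n := by omega
      have h2n : i - M + 1 ≤ n := by omega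
      have q0 : gea a n M (i - M + 1) ≠ 0 := hnz _ h2n
      obtain ⟨hs1, hd1⟩ := IH (i - M) (by omega) h1n
      obtain ⟨hs2, hd2⟩ := IH (i - M + 1) (by omega) h2n
      have hs2' : ∀ m ∈ (gea a n M (i - M + 1)).support, (m + (i - M) + 1) % M = n % M := by
        intro m hm
        rw [show m + (i - M) + 1 = m + (i - M + 1) from by omega]
        exact hs2 m hm
      have hclass' : ∀ m ∈ (gea a n M i).support, (m + i) % M = n % M := by
        intro m hm
        rw [hrec] at hm
        have := mod_class (i - M) _ q0 hs2' _ _ le_rfl hs1 m hm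
        rw [show m + i = m + (i - M) + M from by omega, Nat.add_mod_right]
        exact this
      refine ⟨hclass', ?_⟩
      have hFi : gea a n M i ≠ 0 := hnz i hin
      have hdlt : (gea a n M i).natDegree < (gea a n M (i - M + 1)).natDegree := by
        apply natDegree_lt_natDegree hFi
        rw [hrec]
        exact deg_mod_lt q0
      have hx : ((gea a n M i).natDegree + i) % M = n % M :=
        hclass' _ (natDegree_mem_support_of_nonzero hFi)
      by_contra hcon
      push_neg at hcon
      have := L1 hx.symm hcon
      omega

lemma noBad (n M : ℕ) (a : ℕ → ℝ) (hn : 2 ≤ n) (ha0 : a 0 ≠ 0) (hM : 2 ≤ M)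
    (hnz : ∀ i ≤ n, gea a n M i ≠ 0) :
    ∀ t, ∀ i ≤ n, n - i ≤ t → ¬((gea a n M i).natDegree + i + M ≤ n) := by
  intro t
  induction t with
  | zero =>
    intro i hin hti hbad
    omega
  | succ t IHt =>
    intro i hin hti hbad
    rcases Nat.eq_zero_or_pos i with rfl | hipos
    · have h0 : (gea a n M 0).coeff n = a 0 := by
        rw [gea_lt (by omega : 0 < M)]
        exact geaInit_coeff_n a n M (by omega)
      have : n ≤ (gea a n M 0).natDegree :=
        le_natDegree_of_ne_zero (by rw [h0]; exact ha0)
      omega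
    · set j := i + M - 1 with hj
      have hjM : M ≤ j := by omega
      have e1 : j - M = i - 1 := by omega
      have e2 : j - M + 1 = i := by omega
      have hrec : gea a n M j = gea a n M (i - 1) % gea a n M i := by
        rw [gea_ge hM hjM, e2, e1]
      have hjn : j ≤ n := by omega
      have hj0 : gea a n M j ≠ 0 := hnz j hjn
      have hi0 : gea a n M i ≠ 0 := hnz i hin
      have hdlt : (gea a n M j).natDegree < (gea a n M i).natDegree := by
        apply natDegree_lt_natDegree hj0
        rw [hrec]
        exact deg_mod_lt hi0
      have hx : ((gea a n M j).natDegree + j) % M = n % M :=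
        (master n M a hM hnz j hjn).1 _ (natDegree_mem_support_of_nonzero hj0)
      have hxlt : (gea a n M j).natDegree + j < n := by omega
      have hstep := L1 hx hxlt
      exact IHt j hjn (by omega) hstep

lemma exactDeg (n M : ℕ) (a : ℕ → ℝ) (hn : 2 ≤ n) (ha0 : a 0 ≠ 0) (hM : 2 ≤ M)
    (hnz : ∀ i ≤ n, gea a n M i ≠ 0) :
    ∀ i ≤ n, (gea a n M i).natDegree = n - i := by
  intro i hin
  obtain ⟨hs, hd⟩ := master n M a hM hnz i hin
  have hx : ((gea a n M i).natDegree + i) % M = n % M :=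
    hs _ (natDegree_mem_support_of_nonzero (hnz i hin))
  have hnb := noBad n M a hn ha0 hM hnz (n - i) i hin le_rfl
  by_contra h
  have hlt : (gea a n M i).natDegree + i < n := by omega
  have := L1 hx hlt
  omega

/-- In the non-degenerate case of the generalized Euclidean algorithm (none of
`f_0, ..., f_n` is zero), `deg f_k = n - k` and each quotient `d_i = f_i / f_{i+1}` is the
monomial `(h_i / h_{i+1}) x`, where `h_i` is the leading coefficient of `f_i`. -/
theorem gen_euclid_nondegenerate_degrees_and_quotients
    (n M : ℕ) (a : ℕ → ℝ) (hn : 2 ≤ n) (ha0 : a 0 ≠ 0) (hM : 2 ≤ M) (hMn : M ≤ n)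
    (hnz : ∀ i ≤ n, gea a n M i ≠ 0) :
    (∀ k ≤ n, (gea a n M k).degree = ((n - k : ℕ) : WithBot ℕ)) ∧
    (∀ i ≤ n - M, gea a n M i / gea a n M (i + 1) =
      C ((gea a n M i).leadingCoeff / (gea a n M (i + 1)).leadingCoeff) * X) := by
  have exD := exactDeg n M a hn ha0 hM hnz
  constructor
  · intro k hk
    rw [degree_eq_natDegree (hnz k hk), exD k hk]
  · intro i hi
    have hiM : i + M ≤ n := by omega
    have hi1 : i + 1 ≤ n := by omega
    have hin : i ≤ n := by omega
    have hp0 : gea a n M i ≠ 0 := hnz i hin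
    have hq0 : gea a n M (i + 1) ≠ 0 := hnz _ hi1
    set p := gea a n M i with hp
    set q := gea a n M (i + 1) with hq
    have hdp : p.natDegree = n - i := exD i hin
    have hdq : q.natDegree = n - i - 1 := by
      rw [exD (i + 1) hi1]
      omega
    have hsp : ∀ m ∈ p.support, (m + i) % M = n % M := (master n M a hM hnz i hin).1
    have hsq : ∀ m ∈ q.support, (m + (i + 1)) % M = n % M :=
      (master n M a hM hnz (i + 1) hi1).1
    set lp := p.leadingCoeff with hlp
    set lq := q.leadingCoeff with hlqd
    have hlq : lq ≠ 0 := leadingCoeff_ne_zero.mpr hq0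
    set Q : Polynomial ℝ := C (lp / lq) * X with hQ
    set R : Polynomial ℝ := p - Q * q with hR
    have hmonic : (q * C lq⁻¹).Monic := monic_mul_leadingCoeff_inv hq0
    have hCC : C lq⁻¹ * C lq = 1 := by rw [← C_mul, inv_mul_cancel₀ hlq, C_1]
    have hkey : R + (q * C lq⁻¹) * (C lq * Q) = p := by
      calc R + (q * C lq⁻¹) * (C lq * Q)
          = p - Q * q + (C lq⁻¹ * C lq) * (Q * q) := by rw [hR]; ring
        _ = p := by rw [hCC, one_mul]; ring
    have hdegR : R.degree < (q * C lq⁻¹).degree := by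
      rw [degree_mul_leadingCoeff_inv q hq0, degree_eq_natDegree hq0, hdq,
        degree_lt_iff_coeff_zero]
      intro m hm
      obtain ⟨d, rfl⟩ : ∃ d, m = d + 1 := ⟨m - 1, by omega⟩
      have hQq : (Q * q).coeff (d + 1) = (lp / lq) * q.coeff d := by
        rw [show Q * q = C (lp / lq) * (X * q) from mul_assoc _ _ _, coeff_C_mul, coeff_X_mul]
      rw [hR, coeff_sub, hQq]
      rcases lt_trichotomy (d + 1) (n - i) with hlt | heq | hgt
      · have hcp : p.coeff (d + 1) = 0 := by
          by_contra hc
          have h1 := hsp _ (mem_support_iff.mpr hc)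
          rw [show d + 1 + i = n - 1 from by omega] at h1
          have := L1 h1 (by omega : n - 1 < n)
          omega
        have hcq : q.coeff d = 0 := by
          by_contra hc
          have h1 := hsq _ (mem_support_iff.mpr hc)
          rw [show d + (i + 1) = n - 1 from by omega] at h1
          have := L1 h1 (by omega : n - 1 < n)
          omega
        rw [hcp, hcq, mul_zero, sub_zero]
      · have hcp : p.coeff (d + 1) = lp := by rw [heq, ← hdp]; rfl
        have hcq : q.coeff d = lq := by rw [show d = n - i - 1 from by omega, ← hdq]; rfl
        rw [hcp, hcq, div_mul_cancel₀ _ hlq, sub_self]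
      · have hcp : p.coeff (d + 1) = 0 := coeff_eq_zero_of_natDegree_lt (by omega)
        have hcq : q.coeff d = 0 := coeff_eq_zero_of_natDegree_lt (by omega)
        rw [hcp, hcq, mul_zero, sub_zero]
    have hdiv := (div_modByMonic_unique (C lq * Q) R hmonic ⟨hkey, hdegR⟩).1
    rw [Polynomial.div_def, hdiv, ← mul_assoc, ← C_mul, inv_mul_cancel₀ hlq, C_1, one_mul]
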